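/- (Lemma 3.1(ii), pointwise form.) Let c > 0 and η, τ ∈ ℝ with η² − τ² = −4c², and let ν ∈ ℝ³ be a unit vector. Then for all u, v ∈ ℂ⁴ the pair (u,v) satisfies the (η,τ)-jump condition if and only if ( 2c I₄ − i(α·ν)(η I₄ + τ β) ) u = 0 and ( 2c I₄ + i(α·ν)(η I₄ + τ β) ) v = 0. -/

import Mathlib

open Matrix

noncomputable section

/-- The Pauli matrices. -/
def pauli : Fin 3 → Matrix (Fin 2) (Fin 2) ℂ
  | 0 => !![0, 1; 1, 0]
  | 1 => !![0, -Complex.I; Complex.I, 0]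
  | 2 => !![1, 0; 0, -1]

/-- The Dirac matrices α₁, α₂, α₃. -/
def diracAlpha (j : Fin 3) : Matrix (Fin 4) (Fin 4) ℂ :=
  Matrix.reindex finSumFinEquiv finSumFinEquiv (Matrix.fromBlocks 0 (pauli j) (pauli j) 0)

/-- The Dirac matrix β. -/
def diracBeta : Matrix (Fin 4) (Fin 4) ℂ :=
  Matrix.reindex finSumFinEquiv finSumFinEquiv ((Matrix.fromBlocks 1 0 0 (-1) : Matrix (Fin 2 ⊕ Fin 2) (Fin 2 ⊕ Fin 2) ℂ))

/-- The matrix γ₅. -/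
def gammaFive : Matrix (Fin 4) (Fin 4) ℂ :=
  Matrix.reindex finSumFinEquiv finSumFinEquiv ((Matrix.fromBlocks 0 1 1 0 : Matrix (Fin 2 ⊕ Fin 2) (Fin 2 ⊕ Fin 2) ℂ))

/-- α·x for x ∈ ℝ³. -/
def alphaDot (x : EuclideanSpace ℝ (Fin 3)) : Matrix (Fin 4) (Fin 4) ℂ :=
  ∑ j : Fin 3, (x j : ℂ) • diracAlpha j

lemma alpha0 : diracAlpha 0 = !![0,0,0,1; 0,0,1,0; 0,1,0,0; 1,0,0,0] := by
  ext i j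
  fin_cases i <;> fin_cases j <;>
    norm_num [diracAlpha, pauli, Matrix.fromBlocks, finSumFinEquiv, Matrix.submatrix_apply, Fin.addCases, Fin.castLT, Fin.subNat, Matrix.vecHead, Matrix.vecTail, Sum.elim]

lemma alpha1 : diracAlpha 1 = !![0,0,0,-Complex.I; 0,0,Complex.I,0; 0,-Complex.I,0,0; Complex.I,0,0,0] := by
  ext i j
  fin_cases i <;> fin_cases j <;>
    norm_num [diracAlpha, pauli, Matrix.fromBlocks, finSumFinEquiv, Matrix.submatrix_apply, Fin.addCases, Fin.castLT, Fin.subNat, Matrix.vecHead, Matrix.vecTail, Sum.elim]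

lemma alpha2 : diracAlpha 2 = !![0,0,1,0; 0,0,0,-1; 1,0,0,0; 0,-1,0,0] := by
  ext i j
  fin_cases i <;> fin_cases j <;>
    norm_num [diracAlpha, pauli, Matrix.fromBlocks, finSumFinEquiv, Matrix.submatrix_apply, Fin.addCases, Fin.castLT, Fin.subNat, Matrix.vecHead, Matrix.vecTail, Sum.elim]

lemma betaEq : diracBeta = !![1,0,0,0; 0,1,0,0; 0,0,-1,0; 0,0,0,-1] := by
  ext i j
  fin_cases i <;> fin_cases j <;>
    norm_num [diracBeta, Matrix.fromBlocks, finSumFinEquiv, Matrix.submatrix_apply, Fin.addCases, Fin.castLT, Fin.subNat, Matrix.vecHead, Matrix.vecTail, Sum.elim, Matrix.one_apply]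

lemma alphaDot_eq (x : EuclideanSpace ℝ (Fin 3)) :
    alphaDot x = !![0, 0, (x 2 : ℂ), (x 0 : ℂ) - Complex.I * (x 1 : ℂ);
                    0, 0, (x 0 : ℂ) + Complex.I * (x 1 : ℂ), -(x 2 : ℂ);
                    (x 2 : ℂ), (x 0 : ℂ) - Complex.I * (x 1 : ℂ), 0, 0;
                    (x 0 : ℂ) + Complex.I * (x 1 : ℂ), -(x 2 : ℂ), 0, 0] := by
  rw [alphaDot, Fin.sum_univ_three, alpha0, alpha1, alpha2]
  ext i j
  fin_cases i <;> fin_cases j <;> simp [Matrix.vecHead, Matrix.vecTail] <;> ring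

lemma sum_sq_of_norm_one (ν : EuclideanSpace ℝ (Fin 3)) (hν : ‖ν‖ = 1) :
    (ν 0) ^ 2 + (ν 1) ^ 2 + (ν 2) ^ 2 = 1 := by
  have h1 : ‖ν‖ ^ 2 = 1 := by rw [hν]; norm_num
  rw [EuclideanSpace.norm_eq, Real.sq_sqrt (by positivity)] at h1
  simpa [Fin.sum_univ_three, Real.norm_eq_abs, sq_abs] using h1

lemma alphaDot_sq (ν : EuclideanSpace ℝ (Fin 3)) (hν : ‖ν‖ = 1) :
    alphaDot ν * alphaDot ν = 1 := by
  have hs : ((ν 0 : ℂ)) ^ 2 + (ν 1 : ℂ) ^ 2 + (ν 2 : ℂ) ^ 2 = 1 := by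
    rw [← Complex.ofReal_one, ← sum_sq_of_norm_one ν hν]; push_cast; ring
  rw [alphaDot_eq]
  ext i j
  fin_cases i <;> fin_cases j <;>
    simp [Matrix.mul_apply, Fin.sum_univ_four, Matrix.one_apply, Matrix.vecHead, Matrix.vecTail] <;>
    (try ring_nf) <;> (try simp [Complex.I_sq]) <;> (try ring) <;>
    (try linear_combination hs) <;> (try linear_combination -hs)

lemma M_eq (η τ : ℝ) : (η : ℂ) • (1 : Matrix (Fin 4) (Fin 4) ℂ) + (τ : ℂ) • diracBeta =
    !![(η : ℂ) + τ, 0, 0, 0; 0, (η : ℂ) + τ, 0, 0; 0, 0, (η : ℂ) - τ, 0; 0, 0, 0, (η : ℂ) - τ] := by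
  rw [betaEq]
  ext i j
  fin_cases i <;> fin_cases j <;>
    simp [Matrix.one_apply, Matrix.vecHead, Matrix.vecTail] <;> ring

set_option maxHeartbeats 2000000 in
lemma AM_sq (c η τ : ℝ) (h : η ^ 2 - τ ^ 2 = -(4 * c ^ 2)) (ν : EuclideanSpace ℝ (Fin 3))
    (hν : ‖ν‖ = 1) :
    (alphaDot ν * ((η : ℂ) • (1 : Matrix (Fin 4) (Fin 4) ℂ) + (τ : ℂ) • diracBeta)) *
      (alphaDot ν * ((η : ℂ) • (1 : Matrix (Fin 4) (Fin 4) ℂ) + (τ : ℂ) • diracBeta)) =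
    (-(4 * (c : ℂ) ^ 2)) • 1 := by
  have hs : ((ν 0 : ℂ)) ^ 2 + (ν 1 : ℂ) ^ 2 + (ν 2 : ℂ) ^ 2 = 1 := by
    rw [← Complex.ofReal_one, ← sum_sq_of_norm_one ν hν]; push_cast; ring
  have hc : (η : ℂ) ^ 2 - (τ : ℂ) ^ 2 = -(4 * (c : ℂ) ^ 2) := by exact_mod_cast congrArg (fun t : ℝ => (t : ℂ)) h
  rw [M_eq, alphaDot_eq]
  ext i j
  fin_cases i <;> fin_cases j <;>
    simp [Matrix.mul_apply, Fin.sum_univ_four, Matrix.one_apply, Matrix.vecHead, Matrix.vecTail] <;>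
    (try ring_nf) <;> (try simp [Complex.I_sq]) <;> (try ring) <;>
    (try linear_combination (((η : ℂ) - τ) * ((η : ℂ) + τ)) * hs + hc) <;>
    (try linear_combination (-(((η : ℂ) - τ) * ((η : ℂ) + τ))) * hs - hc) <;>
    (try linear_combination hc) <;> (try linear_combination -hc)

/-- The (η,τ)-jump condition. -/
def JumpCond (c η τ : ℝ) (ν : EuclideanSpace ℝ (Fin 3)) (u v : Fin 4 → ℂ) : Prop :=
  (Complex.I * (c : ℂ)) • ((alphaDot ν) *ᵥ (u - v)) +
    ((1 : ℂ) / 2) • ((((η : ℂ) • (1 : Matrix (Fin 4) (Fin 4) ℂ) + (τ : ℂ) • diracBeta)) *ᵥ (u + v)) = 0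


theorem jump_condition_confinement (c η τ : ℝ) (hc : 0 < c)
    (h : η ^ 2 - τ ^ 2 = -(4 * c ^ 2))
    (ν : EuclideanSpace ℝ (Fin 3)) (hν : ‖ν‖ = 1) :
    ∀ u v : Fin 4 → ℂ, JumpCond c η τ ν u v ↔
      ((((2 * (c : ℂ)) • (1 : Matrix (Fin 4) (Fin 4) ℂ)
          - Complex.I • (alphaDot ν * ((η : ℂ) • (1 : Matrix (Fin 4) (Fin 4) ℂ)
            + (τ : ℂ) • diracBeta))) *ᵥ u = 0) ∧
       (((2 * (c : ℂ)) • (1 : Matrix (Fin 4) (Fin 4) ℂ)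
          + Complex.I • (alphaDot ν * ((η : ℂ) • (1 : Matrix (Fin 4) (Fin 4) ℂ)
            + (τ : ℂ) • diracBeta))) *ᵥ v = 0)) := by
  intro u v
  set A := alphaDot ν with hA
  set M := (η : ℂ) • (1 : Matrix (Fin 4) (Fin 4) ℂ) + (τ : ℂ) • diracBeta with hM
  have hA2 : A * A = 1 := alphaDot_sq ν hν
  have hB2 : (A * M) * (A * M) = (-(4 * (c : ℂ) ^ 2)) • 1 := AM_sq c η τ h ν hν
  set B := A * M with hB
  have hAv : ∀ x : Fin 4 → ℂ, A *ᵥ (A *ᵥ x) = x := by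
    intro x; rw [Matrix.mulVec_mulVec, hA2, Matrix.one_mulVec]
  have hBv : ∀ x : Fin 4 → ℂ, B *ᵥ (B *ᵥ x) = (-(4 * (c : ℂ) ^ 2)) • x := by
    intro x; rw [Matrix.mulVec_mulVec, hB2, Matrix.smul_mulVec, Matrix.one_mulVec]
  have hc0 : (-2 * Complex.I * (c : ℂ)) ≠ 0 := by
    simp [Complex.ext_iff, hc.ne']
  -- Step 1: jump condition is equivalent to B (u+v) = (-2 i c) (u - v)
  have step1 : JumpCond c η τ ν u v ↔ B *ᵥ (u + v) = (-2 * Complex.I * (c : ℂ)) • (u - v) := by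
    unfold JumpCond
    rw [← hA, ← hM]
    constructor
    · intro e
      have e2 := congrArg (fun w => A *ᵥ w) e
      simp only [Matrix.mulVec_add, Matrix.mulVec_smul, Matrix.mulVec_mulVec, hA2,
        Matrix.one_mulVec, Matrix.mulVec_zero, ← hB] at e2
      rw [Matrix.mulVec_add]
      linear_combination (norm := module) (2 : ℂ) • e2
    · intro r
      have e2 : A *ᵥ ((Complex.I * (c : ℂ)) • (A *ᵥ (u - v)) +
          ((1 : ℂ) / 2) • (M *ᵥ (u + v))) = 0 := by
        rw [Matrix.mulVec_add, Matrix.mulVec_smul, Matrix.mulVec_smul, Matrix.mulVec_mulVec,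
          hA2, Matrix.one_mulVec, Matrix.mulVec_mulVec, ← hB, r]
        linear_combination (norm := module)
      calc (Complex.I * (c : ℂ)) • (A *ᵥ (u - v)) + ((1 : ℂ) / 2) • (M *ᵥ (u + v))
          = A *ᵥ (A *ᵥ ((Complex.I * (c : ℂ)) • (A *ᵥ (u - v)) +
              ((1 : ℂ) / 2) • (M *ᵥ (u + v)))) := (hAv _).symm
        _ = 0 := by rw [e2, Matrix.mulVec_zero]
  -- Step 2: characterizations for u and v separately
  have goal1 : (((2 * (c : ℂ)) • (1 : Matrix (Fin 4) (Fin 4) ℂ) - Complex.I • B) *ᵥ u = 0)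
      ↔ B *ᵥ u = (-2 * Complex.I * (c : ℂ)) • u := by
    rw [Matrix.sub_mulVec, Matrix.smul_mulVec, Matrix.smul_mulVec, Matrix.one_mulVec]
    constructor
    · intro e
      have e2 := congrArg (fun w => Complex.I • w) e
      simp only [smul_sub, smul_smul, Complex.I_mul_I, neg_smul, one_smul, sub_neg_eq_add,
        smul_zero] at e2
      linear_combination (norm := module) e2
    · intro e
      rw [e]
      match_scalars <;>
        first
        | ring1
        | linear_combination (2 * (c : ℂ)) * Complex.I_sq
        | linear_combination (-2 * (c : ℂ)) * Complex.I_sq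
        | linear_combination (4 * (c : ℂ)) * Complex.I_sq
        | linear_combination (-4 * (c : ℂ)) * Complex.I_sq
        | linear_combination (4 * (c : ℂ) ^ 2) * Complex.I_sq
        | linear_combination (-4 * (c : ℂ) ^ 2) * Complex.I_sq
  have goal2 : (((2 * (c : ℂ)) • (1 : Matrix (Fin 4) (Fin 4) ℂ) + Complex.I • B) *ᵥ v = 0)
      ↔ B *ᵥ v = (2 * Complex.I * (c : ℂ)) • v := by
    rw [Matrix.add_mulVec, Matrix.smul_mulVec, Matrix.smul_mulVec, Matrix.one_mulVec]
    constructor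
    · intro e
      have e2 := congrArg (fun w => Complex.I • w) e
      simp only [smul_add, smul_smul, Complex.I_mul_I, neg_smul, one_smul, smul_zero] at e2
      linear_combination (norm := module) (-1 : ℂ) • e2
    · intro e
      rw [e]
      match_scalars <;>
        first
        | ring1
        | linear_combination (2 * (c : ℂ)) * Complex.I_sq
        | linear_combination (-2 * (c : ℂ)) * Complex.I_sq
        | linear_combination (4 * (c : ℂ)) * Complex.I_sq
        | linear_combination (-4 * (c : ℂ)) * Complex.I_sq
        | linear_combination (4 * (c : ℂ) ^ 2) * Complex.I_sq
        | linear_combination (-4 * (c : ℂ) ^ 2) * Complex.I_sq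
  rw [step1, goal1, goal2]
  constructor
  · intro P
    have hsum : B *ᵥ u + B *ᵥ v = (-2 * Complex.I * (c : ℂ)) • (u - v) := by
      rw [← Matrix.mulVec_add]; exact P
    have E : (-2 * Complex.I * (c : ℂ)) • (B *ᵥ u - B *ᵥ v) = (-(4 * (c : ℂ) ^ 2)) • (u + v) := by
      have e3 := hBv (u + v)
      rw [P, Matrix.mulVec_smul, Matrix.mulVec_sub] at e3
      exact e3
    have hdiff : B *ᵥ u - B *ᵥ v = (-2 * Complex.I * (c : ℂ)) • (u + v) := by
      apply smul_right_injective (Fin 4 → ℂ) hc0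
      show (-2 * Complex.I * (c : ℂ)) • (B *ᵥ u - B *ᵥ v)
          = (-2 * Complex.I * (c : ℂ)) • ((-2 * Complex.I * (c : ℂ)) • (u + v))
      rw [E]
      match_scalars <;>
        first
        | ring1
        | linear_combination (2 * (c : ℂ)) * Complex.I_sq
        | linear_combination (-2 * (c : ℂ)) * Complex.I_sq
        | linear_combination (4 * (c : ℂ)) * Complex.I_sq
        | linear_combination (-4 * (c : ℂ)) * Complex.I_sq
        | linear_combination (4 * (c : ℂ) ^ 2) * Complex.I_sq
        | linear_combination (-4 * (c : ℂ) ^ 2) * Complex.I_sq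
    constructor
    · linear_combination (norm := module) (2⁻¹ : ℂ) • hsum + (2⁻¹ : ℂ) • hdiff
    · linear_combination (norm := module) (2⁻¹ : ℂ) • hsum - (2⁻¹ : ℂ) • hdiff
  · rintro ⟨hu, hv⟩
    rw [Matrix.mulVec_add, hu, hv]
    module

end
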